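/- arXiv:math/0212380 — 2 statements merged into one kernel-verified Lean document; each statement's English description precedes it below -/
import Mathlib

section
/- In the semidirect product G = F_∞ ⋊_τ ℤ with subgroup F, for every finite subset S of F_∞ there exists a point x of the left coset space G/F such that ι_{F_∞}(s)·x = x for every s ∈ S; that is, every finite subset of F_∞ has a common fixed point in G/F under the left translation action. -/
/-- `Γ n` is the normal subgroup of the free group on generators indexed by `ℤ`
generated by the generators `xᵢ` with `i ≤ n`. -/
def Gamma (n : ℤ) : Subgroup (FreeGroup ℤ) :=
  Subgroup.normalClosure (FreeGroup.of '' {i : ℤ | i ≤ n})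

/-- The shift action `τ : ℤ → Aut(F_∞)`, with `τ k (x m) = x (m + k)`. -/
def tauHom : Multiplicative ℤ →* MulAut (FreeGroup ℤ) :=
  MonoidHom.mk' (fun k => FreeGroup.freeGroupCongr (Equiv.addRight k.toAdd)) (by
    intro k l
    rw [MulAut.mul_def, FreeGroup.freeGroupCongr_trans]
    ext x
    simp [add_assoc, add_comm])

/-- `G = F_∞ ⋊_τ ℤ`. -/
abbrev SDG := FreeGroup ℤ ⋊[tauHom] Multiplicative ℤ

/-- `F` is the image of `Γ 0` under the canonical embedding `F_∞ → G`. -/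
def FF : Subgroup SDG := (Gamma 0).map SemidirectProduct.inl

/-- Every element of the free group lies in the subgroup generated by generators
with indices up to some bound. -/
lemma exists_mem_closure (s : FreeGroup ℤ) :
    ∃ k : ℤ, s ∈ Subgroup.closure (FreeGroup.of '' {i : ℤ | i ≤ k}) := by
  have hdir : Directed (· ≤ ·) (fun k : ℤ =>
      Subgroup.closure (FreeGroup.of '' {i : ℤ | i ≤ k})) := by
    intro a b
    exact ⟨max a b, Subgroup.closure_mono (Set.image_mono fun i hi =>
        le_trans hi (le_max_left a b)),
      Subgroup.closure_mono (Set.image_mono fun i hi => le_trans hi (le_max_right a b))⟩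
  have htop : (⨆ k : ℤ, Subgroup.closure (FreeGroup.of '' {i : ℤ | i ≤ k})) = ⊤ := by
    rw [eq_top_iff, ← FreeGroup.closure_range_of ℤ, Subgroup.closure_le]
    rintro x ⟨i, rfl⟩
    exact Subgroup.mem_iSup_of_mem i (Subgroup.subset_closure ⟨i, le_refl i, rfl⟩)
  have hs : s ∈ ⨆ k : ℤ, Subgroup.closure (FreeGroup.of '' {i : ℤ | i ≤ k}) :=
    htop ▸ Subgroup.mem_top s
  exact (Subgroup.mem_iSup_of_directed hdir).mp hs

lemma tau_apply (k : ℤ) (i : ℤ) :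
    tauHom (Multiplicative.ofAdd k) (FreeGroup.of i) = FreeGroup.of (i + k) := rfl

/-- Shifting down by `N` sends the subgroup generated by generators of index `≤ N`
into `Γ 0`. -/
lemma tau_inv_mem (N : ℤ) (s : FreeGroup ℤ)
    (hsN : s ∈ Subgroup.closure (FreeGroup.of '' {i : ℤ | i ≤ N})) :
    (tauHom (Multiplicative.ofAdd N))⁻¹ s ∈ Gamma 0 := by
  set F : FreeGroup ℤ →* FreeGroup ℤ :=
    ((tauHom (Multiplicative.ofAdd N))⁻¹ : MulAut (FreeGroup ℤ)).toMonoidHom with hF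
  have hap : ∀ i : ℤ, F (FreeGroup.of i) = FreeGroup.of (i - N) := by
    intro i
    show ((tauHom (Multiplicative.ofAdd N))⁻¹ : MulAut (FreeGroup ℤ)) (FreeGroup.of i) = _
    rw [← map_inv tauHom, ← ofAdd_neg, tau_apply, sub_eq_add_neg]
  have himg : F '' (FreeGroup.of '' {i : ℤ | i ≤ N}) = FreeGroup.of '' {i : ℤ | i ≤ 0} := by
    ext x
    constructor
    · rintro ⟨y, ⟨i, hi, rfl⟩, rfl⟩
      refine ⟨i - N, ?_, (hap i).symm⟩
      simp only [Set.mem_setOf_eq] at hi ⊢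
      omega
    · rintro ⟨j, hj, rfl⟩
      refine ⟨FreeGroup.of (j + N), ⟨j + N, ?_, rfl⟩, ?_⟩
      · simp only [Set.mem_setOf_eq] at hj ⊢
        omega
      · rw [hap (j + N)]
        congr 1
        ring
  have hm := Subgroup.mem_map_of_mem F hsN
  rw [MonoidHom.map_closure, himg] at hm
  have hle : Subgroup.closure (FreeGroup.of '' {i : ℤ | i ≤ 0}) ≤ Gamma 0 :=
    Subgroup.closure_le (Gamma 0) |>.mpr Subgroup.subset_normalClosure
  exact hle hm

/-- A coset `mk g` is fixed by `a` as soon as `(a * g)⁻¹ * g ∈ F`. -/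
lemma fix_of_mem (a g : SDG) (h : (a * g)⁻¹ * g ∈ FF) :
    a • (QuotientGroup.mk g : SDG ⧸ FF) = QuotientGroup.mk g := by
  show QuotientGroup.mk (a * g) = _
  rw [QuotientGroup.eq]
  exact h

/-- Every finite subset `S` of `F_∞` has a common fixed point in the coset space `G/F`
under the left translation action (through the embedding `ι_{F_∞}`). -/
theorem finite_common_fixed_point : ∀ S : Finset (FreeGroup ℤ),
    ∃ x : SDG ⧸ FF, ∀ s ∈ S, (SemidirectProduct.inl s : SDG) • x = x := by
  intro S
  choose f hf using exists_mem_closure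
  obtain ⟨N, hNb⟩ : ∃ N : ℤ, ∀ s ∈ S, f s ≤ N := by
    refine ⟨((S.sup fun s => (f s).toNat : ℕ) : ℤ), fun s hs => ?_⟩
    calc f s ≤ ((f s).toNat : ℤ) := Int.self_le_toNat _
    _ ≤ _ := Nat.cast_le.mpr (Finset.le_sup (f := fun s => (f s).toNat) hs)
  refine ⟨QuotientGroup.mk (SemidirectProduct.inr (Multiplicative.ofAdd N)), fun s hs => ?_⟩
  have hsN : s ∈ Subgroup.closure (FreeGroup.of '' {i : ℤ | i ≤ N}) :=
    Subgroup.closure_mono (Set.image_mono fun i hi => le_trans hi (hNb s hs)) (hf s)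
  apply fix_of_mem
  have key : (SemidirectProduct.inl s * SemidirectProduct.inr (Multiplicative.ofAdd N) :
      SDG)⁻¹ * SemidirectProduct.inr (Multiplicative.ofAdd N)
      = SemidirectProduct.inl ((tauHom (Multiplicative.ofAdd N))⁻¹ s⁻¹) := by
    rw [mul_inv_rev, ← map_inv SemidirectProduct.inr, ← map_inv SemidirectProduct.inl,
      ← SemidirectProduct.inl_aut_inv]
  rw [key]
  exact ⟨(tauHom (Multiplicative.ofAdd N))⁻¹ s⁻¹, tau_inv_mem N s⁻¹ (inv_mem hsN), rfl⟩
end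

section
/- There is a bijection Φ from the left coset space G/F onto the disjoint union (sigma type) Σ_{n∈ℤ} F_∞/Γ_n which is equivariant for the F_∞-actions: for every s ∈ F_∞ and every x ∈ G/F, if Φ(x) = (n, c) with c ∈ F_∞/Γ_n, then Φ(ι_{F_∞}(s)·x) = (n, s·c), where s·c denotes left translation of the coset c by s in F_∞/Γ_n. -/
lemma map_gamma (k n : ℤ) :
    (Gamma n).map (FreeGroup.freeGroupCongr (Equiv.addRight k)).toMonoidHom = Gamma (n + k) := by
  unfold Gamma
  refine (Subgroup.map_normalClosure _ _
    (FreeGroup.freeGroupCongr (Equiv.addRight k)).surjective).trans (congrArg _ ?_)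
  ext w
  constructor
  · rintro ⟨y, ⟨i, hi, rfl⟩, rfl⟩
    exact ⟨i + k, by simpa using add_le_add_right hi k, by simp⟩
  · rintro ⟨i, hi, rfl⟩
    exact ⟨FreeGroup.of (i - k), ⟨i - k, by simp only [Set.mem_setOf_eq] at hi ⊢; omega, rfl⟩, by simp⟩

lemma tau_mem_iff (k : ℤ) (w : FreeGroup ℤ) (n : ℤ) :
    (FreeGroup.freeGroupCongr (Equiv.addRight k)) w ∈ Gamma (n + k) ↔ w ∈ Gamma n := by
  rw [← map_gamma k n]
  constructor
  · rintro ⟨y, hy, hyw⟩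
    have : y = w := (FreeGroup.freeGroupCongr (Equiv.addRight k)).injective hyw
    rwa [← this]
  · intro h; exact ⟨w, h, rfl⟩

lemma tauHom_apply (k : Multiplicative ℤ) :
    tauHom k = FreeGroup.freeGroupCongr (Equiv.addRight k.toAdd) := rfl

/-- There is a bijection `Φ` from `G/F` onto the disjoint union `Σ_{n ∈ ℤ} F_∞/Γ n`
which is equivariant for the `F_∞`-actions: `Φ(ι_{F_∞}(s)·x) = (n, s·c)` whenever
`Φ(x) = (n, c)`. -/
theorem coset_space_decomposition :
    ∃ Φ : (SDG ⧸ FF) ≃ (Σ n : ℤ, FreeGroup ℤ ⧸ Gamma n),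
      ∀ (s : FreeGroup ℤ) (x : SDG ⧸ FF),
        Φ ((SemidirectProduct.inl s : SDG) • x) = ⟨(Φ x).1, s • (Φ x).2⟩ := by
  set f : SDG → Σ n : ℤ, FreeGroup ℤ ⧸ Gamma n :=
    fun g => ⟨g.right.toAdd, QuotientGroup.mk g.left⟩ with hf
  have hresp : ∀ a b : SDG, QuotientGroup.leftRel FF a b → f a = f b := by
    intro a b hab
    rw [QuotientGroup.leftRel_apply] at hab
    obtain ⟨γ, hγ, hγab⟩ := hab
    have hb : b = a * SemidirectProduct.inl γ := by
      rw [hγab]; group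
    subst hb
    have hrr : (a * SemidirectProduct.inl γ).right = a.right := by
      simp [SemidirectProduct.mul_right, SemidirectProduct.right_inl]
    have hmem : tauHom a.right γ ∈ Gamma a.right.toAdd := by
      rw [tauHom_apply]
      have := (tau_mem_iff a.right.toAdd γ 0).mpr hγ
      simpa using this
    have hll : (QuotientGroup.mk (a * SemidirectProduct.inl γ).left :
        FreeGroup ℤ ⧸ Gamma a.right.toAdd) = QuotientGroup.mk a.left := by
      show (QuotientGroup.mk (a.left * tauHom a.right γ) :
        FreeGroup ℤ ⧸ Gamma a.right.toAdd) = QuotientGroup.mk a.left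
      exact QuotientGroup.mk_mul_of_mem a.left hmem
    simp only [hf]
    rw [Sigma.mk.inj_iff]
    refine ⟨by rw [hrr], ?_⟩
    rw [hrr]
    exact heq_of_eq hll.symm
  set F₀ : SDG ⧸ FF → Σ n : ℤ, FreeGroup ℤ ⧸ Gamma n := Quotient.lift f hresp with hF₀
  have hinj : Function.Injective F₀ := by
    intro x y
    induction x using Quotient.inductionOn with | h a =>
    induction y using Quotient.inductionOn with | h b =>
    intro hxy
    have h1 : a.right.toAdd = b.right.toAdd := congrArg Sigma.fst hxy
    have hr : a.right = b.right := Multiplicative.toAdd.injective h1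
    have h2 : (QuotientGroup.mk a.left : FreeGroup ℤ ⧸ Gamma a.right.toAdd)
        = QuotientGroup.mk b.left := by
      have := (Sigma.mk.inj_iff.mp hxy).2
      rw [hr] at this ⊢
      exact eq_of_heq this
    have hδ : a.left⁻¹ * b.left ∈ Gamma a.right.toAdd := QuotientGroup.leftRel_apply.mp
      (Quotient.exact' h2)
    apply Quotient.sound'
    rw [QuotientGroup.leftRel_apply]
    refine ⟨tauHom a.right⁻¹ (a.left⁻¹ * b.left), ?_, ?_⟩
    · have h3 : (FreeGroup.freeGroupCongr (Equiv.addRight (-a.right.toAdd)))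
          (a.left⁻¹ * b.left) ∈ Gamma (a.right.toAdd + -a.right.toAdd) := by
        rw [tau_mem_iff]; exact hδ
      have h4 : tauHom a.right⁻¹ (a.left⁻¹ * b.left)
          = (FreeGroup.freeGroupCongr (Equiv.addRight (-a.right.toAdd)))
            (a.left⁻¹ * b.left) := rfl
      rw [h4]
      simpa using h3
    · ext
      · show tauHom a.right⁻¹ (a.left⁻¹ * b.left) = a⁻¹.left * tauHom a⁻¹.right b.left
        rw [SemidirectProduct.inv_left]
        show tauHom a.right⁻¹ (a.left⁻¹ * b.left)
          = tauHom a.right⁻¹ a.left⁻¹ * tauHom a⁻¹.right b.left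
        rw [map_mul]
        rfl
      · show (1 : Multiplicative ℤ) = a⁻¹.right * b.right
        rw [SemidirectProduct.inv_right, hr, inv_mul_cancel]
  have hsurj : Function.Surjective F₀ := by
    rintro ⟨n, c⟩
    induction c using Quotient.inductionOn with | h w =>
    exact ⟨QuotientGroup.mk (⟨w, Multiplicative.ofAdd n⟩ : SDG), rfl⟩
  refine ⟨Equiv.ofBijective F₀ ⟨hinj, hsurj⟩, ?_⟩
  intro s x
  induction x using Quotient.inductionOn with | h a =>
  show F₀ (QuotientGroup.mk ((SemidirectProduct.inl s : SDG) * a)) = _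
  show (⟨((SemidirectProduct.inl s : SDG) * a).right.toAdd,
      QuotientGroup.mk ((SemidirectProduct.inl s : SDG) * a).left⟩ :
      Σ n : ℤ, FreeGroup ℤ ⧸ Gamma n) = ⟨a.right.toAdd, s • QuotientGroup.mk a.left⟩
  have h1 : ((SemidirectProduct.inl s : SDG) * a).right = a.right := by
    simp [SemidirectProduct.mul_right, SemidirectProduct.right_inl]
  have h2 : ((SemidirectProduct.inl s : SDG) * a).left = s * a.left := by
    show (SemidirectProduct.inl s : SDG).left * tauHom (SemidirectProduct.inl s : SDG).right a.left
      = s * a.left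
    rw [SemidirectProduct.left_inl, SemidirectProduct.right_inl, map_one]
    rfl
  rw [h1, h2]
  rfl
end
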